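/- For m = 3: a word over Hanoi automaton states is called a one-letter word if all its states lie in {e, s} for a single non-identity state s. If w₁ and w₂ are one-letter words (possibly for different states s), then for every letter x, the section (w₁w₂)|_x is a one-letter word. -/

import Mathlib

/-- States of the Hanoi automaton: the identity state `e` and a state `a i j`
for each transposition `(i j)`. -/
inductive HState where
  | e : HState
  | a : ℕ → ℕ → HState
deriving DecidableEq

/-- Output function: `a i j` swaps the letters `i` and `j`. -/
def HState.out : HState → ℕ → ℕ
  | .e, x => x
  | .a i j, x => if x = i then j else if x = j then i else x

/-- Transition (section) function: `a i j` goes to `e` on letters `i`, `j`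
and stays put otherwise. -/
def HState.sec : HState → ℕ → HState
  | .e, _ => .e
  | .a i j, x => if x = i ∨ x = j then .e else .a i j

/-- Action of a word of states on a letter: `(s₁⋯sₙ)(x) = s₁(s₂(⋯sₙ(x)))`. -/
def wordOut : List HState → ℕ → ℕ
  | [], x => x
  | s :: w, x => s.out (wordOut w x)

/-- Section of a word of states at a letter: `s'ᵢ = sᵢ|_{(sᵢ₊₁⋯sₙ)(x)}`. -/
def wordSec : List HState → ℕ → List HState
  | [], _ => []
  | s :: w, x => s.sec (wordOut w x) :: wordSec w x

/-- Action of a word of states on a word of letters. -/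
def wordAct : List HState → List ℕ → List ℕ
  | _, [] => []
  | w, x :: v => wordOut w x :: wordAct (wordSec w x) v

/-- Section of a word of states at a word of letters. -/
def wordSecW : List HState → List ℕ → List HState
  | w, [] => w
  | w, x :: v => wordSecW (wordSec w x) v

/-- A state of the Hanoi automaton `H_m`: either `e` or `a i j` with
`1 ≤ i < j ≤ m` (one state per transposition of `{1,…,m}`). -/
def IsHanoiState (m : ℕ) (s : HState) : Prop :=
  s = HState.e ∨ ∃ i j, s = HState.a i j ∧ 1 ≤ i ∧ i < j ∧ j ≤ m

/-- A one-letter word: all states lie in `{e, s}` for a single non-identity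
state `s` of `H_m`. -/
def OneLetterWord (m : ℕ) (w : List HState) : Prop :=
  ∃ s : HState, IsHanoiState m s ∧ s ≠ HState.e ∧ ∀ t ∈ w, t = HState.e ∨ t = s


lemma wordOut_append (w₁ w₂ : List HState) (x : ℕ) :
    wordOut (w₁ ++ w₂) x = wordOut w₁ (wordOut w₂ x) := by
  induction w₁ with
  | nil => rfl
  | cons s w ih => simp [wordOut, ih]

lemma wordSec_append (w₁ w₂ : List HState) (x : ℕ) :
    wordSec (w₁ ++ w₂) x = wordSec w₁ (wordOut w₂ x) ++ wordSec w₂ x := by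
  induction w₁ with
  | nil => rfl
  | cons s w ih => simp [wordSec, ih, wordOut_append]

lemma wordOut_fix (k l x : ℕ) (w : List HState)
    (hw : ∀ t ∈ w, t = HState.e ∨ t = HState.a k l)
    (hk : x ≠ k) (hl : x ≠ l) : wordOut w x = x := by
  induction w with
  | nil => rfl
  | cons s w ih =>
    have ih' := ih (fun t ht => hw t (List.mem_cons_of_mem _ ht))
    rcases hw s List.mem_cons_self with rfl | rfl <;>
      simp [wordOut, HState.out, ih', hk, hl]

lemma wordOut_orbit (k l x : ℕ) (w : List HState)
    (hw : ∀ t ∈ w, t = HState.e ∨ t = HState.a k l)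
    (hx : x = k ∨ x = l) : wordOut w x = k ∨ wordOut w x = l := by
  induction w with
  | nil => exact hx
  | cons s w ih =>
    have ih' := ih (fun t ht => hw t (List.mem_cons_of_mem _ ht))
    rcases hw s List.mem_cons_self with rfl | rfl
    · simpa [wordOut, HState.out] using ih'
    · rcases ih' with h | h <;>
        simp [wordOut, HState.out, h]

lemma wordSec_mem (k l x : ℕ) (w : List HState)
    (hw : ∀ t ∈ w, t = HState.e ∨ t = HState.a k l) :
    ∀ t ∈ wordSec w x, t = HState.e ∨ t = HState.a k l := by
  induction w with
  | nil => simp [wordSec]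
  | cons s w ih =>
    have ih' := ih (fun t ht => hw t (List.mem_cons_of_mem _ ht))
    intro t ht
    rcases List.mem_cons.mp ht with rfl | ht'
    · rcases hw s List.mem_cons_self with rfl | rfl
      · simp [HState.sec]
      · simp only [HState.sec]; split <;> simp
    · exact ih' t ht'

lemma wordSec_trivial (k l x : ℕ) (w : List HState)
    (hw : ∀ t ∈ w, t = HState.e ∨ t = HState.a k l)
    (hx : x = k ∨ x = l) : ∀ t ∈ wordSec w x, t = HState.e := by
  induction w with
  | nil => simp [wordSec]
  | cons s w ih =>
    have hw' := fun t ht => hw t (List.mem_cons_of_mem _ ht)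
    have ih' := ih hw'
    intro t ht
    rcases List.mem_cons.mp ht with rfl | ht'
    · rcases hw s List.mem_cons_self with rfl | rfl
      · simp [HState.sec]
      · have := wordOut_orbit k l x w hw' hx
        simp [HState.sec, this]
    · exact ih' t ht'

/-- For `m = 3`: the section of a product of two one-letter words at any letter
is a one-letter word. -/
theorem section_of_two_one_letter_words (w₁ w₂ : List HState)
    (h₁ : OneLetterWord 3 w₁) (h₂ : OneLetterWord 3 w₂)
    (x : ℕ) (hx : x ∈ Finset.Icc 1 3) :
    OneLetterWord 3 (wordSec (w₁ ++ w₂) x) := by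

  obtain ⟨s₁, hs₁, hs₁e, hw₁⟩ := h₁
  obtain ⟨s₂, hs₂, hs₂e, hw₂⟩ := h₂
  rcases hs₁ with rfl | ⟨i, j, rfl, hi1, hij, hj3⟩
  · exact absurd rfl hs₁e
  rcases hs₂ with rfl | ⟨k, l, rfl, hk1, hkl, hl3⟩
  · exact absurd rfl hs₂e
  simp only [Finset.mem_Icc] at hx
  rw [wordSec_append]
  by_cases hxk : x = k ∨ x = l
  · refine ⟨HState.a i j, Or.inr ⟨i, j, rfl, hi1, hij, hj3⟩, by simp, ?_⟩
    intro t ht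
    rcases List.mem_append.mp ht with ht' | ht'
    · exact wordSec_mem i j _ w₁ hw₁ t ht'
    · exact Or.inl (wordSec_trivial k l x w₂ hw₂ hxk t ht')
  · push_neg at hxk
    have hy : wordOut w₂ x = x := wordOut_fix k l x w₂ hw₂ hxk.1 hxk.2
    by_cases hxi : x = i ∨ x = j
    · refine ⟨HState.a k l, Or.inr ⟨k, l, rfl, hk1, hkl, hl3⟩, by simp, ?_⟩
      intro t ht
      rcases List.mem_append.mp ht with ht' | ht'
      · rw [hy] at ht'
        exact Or.inl (wordSec_trivial i j x w₁ hw₁ hxi t ht')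
      · exact wordSec_mem k l x w₂ hw₂ t ht'
    · push_neg at hxi
      have hik : i = k ∧ j = l := by omega
      obtain ⟨rfl, rfl⟩ := hik
      refine ⟨HState.a i j, Or.inr ⟨i, j, rfl, hi1, hij, hj3⟩, by simp, ?_⟩
      intro t ht
      rcases List.mem_append.mp ht with ht' | ht'
      · exact wordSec_mem i j _ w₁ hw₁ t ht'
      · exact wordSec_mem i j x w₂ hw₂ t ht'
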